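/- arXiv:1409.6524 — 4 statements merged into one kernel-verified Lean document; each statement's English description precedes it below -/
import Mathlib

section
/- Let P1 be an invertible Hermitian n×n matrix and W̃_B an n×2n complex matrix. Suppose that for all (f1, f0) ∈ ker W̃_B we have f1* P1 f1 - f0* P1 f0 ≤ 0. Then rank W̃_B = n. -/
open Matrix

set_option maxHeartbeats 1000000 in
theorem stmt3 (n : ℕ) (P1 : Matrix (Fin n) (Fin n) ℂ)
    (hHerm : P1.IsHermitian) (hInv : IsUnit P1)
    (WB : Matrix (Fin n) (Fin n ⊕ Fin n) ℂ)
    (hker : ∀ f1 f0 : Fin n → ℂ, WB.mulVec (Sum.elim f1 f0) = 0 →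
      (star f1 ⬝ᵥ P1.mulVec f1 - star f0 ⬝ᵥ P1.mulVec f0).re ≤ 0) :
    WB.rank = n := by
  classical
  set d : Fin n → ℝ := hHerm.eigenvalues with hd
  set U : Matrix (Fin n) (Fin n) ℂ := (hHerm.eigenvectorUnitary : Matrix (Fin n) (Fin n) ℂ) with hU
  have hUU : star U * U = 1 := (Matrix.mem_unitaryGroup_iff').mp hHerm.eigenvectorUnitary.2
  have hspec : P1 = U * diagonal (Complex.ofReal ∘ d) * star U := hHerm.spectral_theorem
  -- eigenvalues are nonzero
  have hdne : ∀ i, d i ≠ 0 := by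
    intro i hi
    have hdet : P1.det ≠ 0 := by
      simpa using hInv.map (Matrix.detMonoidHom (n := Fin n) (R := ℂ)) |>.ne_zero
    rw [hHerm.det_eq_prod_eigenvalues] at hdet
    refine hdet (Finset.prod_eq_zero (Finset.mem_univ i) ?_)
    have : hHerm.eigenvalues i = 0 := hi
    rw [this]; simp
  -- the positive subspace map
  set pp : (Fin n → ℂ) → (Fin n → ℂ) := fun g i => if 0 < d i then g i else 0 with hpp
  set np : (Fin n → ℂ) → (Fin n → ℂ) := fun g i => if 0 < d i then 0 else g i with hnp
  set T : (Fin n → ℂ) →ₗ[ℂ] (Fin n ⊕ Fin n → ℂ) :=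
    { toFun := fun g => Sum.elim (U.mulVec (pp g)) (U.mulVec (np g))
      map_add' := by
        intro x y
        have h1 : pp (x + y) = pp x + pp y := by
          funext i; rw [hpp]; simp only [Pi.add_apply]; split <;> simp
        have h2 : np (x + y) = np x + np y := by
          funext i; rw [hnp]; simp only [Pi.add_apply]; split <;> simp
        funext j
        cases j <;> simp [h1, h2, Matrix.mulVec_add]
      map_smul' := by
        intro c x
        have h1 : pp (c • x) = c • pp x := by
          funext i; rw [hpp]; simp only [Pi.smul_apply]; split <;> simp
        have h2 : np (c • x) = c • np x := by
          funext i; rw [hnp]; simp only [Pi.smul_apply]; split <;> simp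
        funext j
        cases j <;> simp [h1, h2, Matrix.mulVec_smul] } with hT
  have hUinj : ∀ v : Fin n → ℂ, U.mulVec v = 0 → v = 0 := by
    intro v hv
    have : (star U).mulVec (U.mulVec v) = 0 := by rw [hv, Matrix.mulVec_zero]
    rwa [Matrix.mulVec_mulVec, hUU, Matrix.one_mulVec] at this
  have hTinj : Function.Injective T := by
    rw [← LinearMap.ker_eq_bot, LinearMap.ker_eq_bot']
    intro g hg
    have h1 : U.mulVec (pp g) = 0 := by
      funext i; exact congrFun hg (Sum.inl i)
    have h0 : U.mulVec (np g) = 0 := by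
      funext i; exact congrFun hg (Sum.inr i)
    have hp := hUinj _ h1
    have hn := hUinj _ h0
    funext i
    by_cases hdi : 0 < d i
    · have := congrFun hp i
      rw [hpp] at this
      simpa [hdi] using this
    · have := congrFun hn i
      rw [hnp] at this
      simpa [hdi] using this
  -- the quadratic form on vectors of the form U *ᵥ v
  have key : ∀ v : Fin n → ℂ,
      star (U.mulVec v) ⬝ᵥ P1.mulVec (U.mulVec v)
        = ∑ i, (d i : ℂ) * ((Complex.normSq (v i) : ℝ) : ℂ) := by
    intro v
    rw [hspec, Matrix.star_mulVec, Matrix.mulVec_mulVec]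
    rw [show U * diagonal (Complex.ofReal ∘ d) * star U * U = U * diagonal (Complex.ofReal ∘ d) by
      rw [mul_assoc, hUU, mul_one]]
    rw [← Matrix.dotProduct_mulVec, Matrix.mulVec_mulVec]
    rw [show Uᴴ * (U * diagonal (Complex.ofReal ∘ d)) = diagonal (Complex.ofReal ∘ d) by
      rw [← mul_assoc, ← Matrix.star_eq_conjTranspose, hUU, one_mul]]
    rw [dotProduct]
    refine Finset.sum_congr rfl fun i _ => ?_
    rw [Matrix.mulVec_diagonal]
    simp only [Pi.star_apply, Function.comp_apply, RCLike.star_def]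
    rw [show (starRingEnd ℂ) (v i) * ((d i : ℂ) * v i)
        = (d i : ℂ) * (v i * (starRingEnd ℂ) (v i)) by ring, Complex.mul_conj]
  -- rank ≥ n
  have hge : n ≤ WB.rank := by
    by_contra hlt
    push_neg at hlt
    have hrn := WB.mulVecLin.finrank_range_add_finrank_ker
    have hfr : Module.finrank ℂ (Fin n ⊕ Fin n → ℂ) = 2 * n := by
      simp [Module.finrank_pi, two_mul]
    have hrank_eq : WB.rank = Module.finrank ℂ (LinearMap.range WB.mulVecLin) := rfl
    have hker_dim : n + 1 ≤ Module.finrank ℂ (LinearMap.ker WB.mulVecLin) := by omega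
    set K := LinearMap.ker WB.mulVecLin with hK
    set V := LinearMap.range T with hV
    have hVdim : Module.finrank ℂ V = n := by
      rw [hV, LinearMap.finrank_range_of_inj hTinj]
      simp
    have hsup : Module.finrank ℂ (K ⊔ V : Submodule ℂ (Fin n ⊕ Fin n → ℂ)) ≤ 2 * n := by
      have := Submodule.finrank_le (K ⊔ V : Submodule ℂ (Fin n ⊕ Fin n → ℂ))
      omega
    have hint : 0 < Module.finrank ℂ (K ⊓ V : Submodule ℂ (Fin n ⊕ Fin n → ℂ)) := by
      have := Submodule.finrank_sup_add_finrank_inf_eq K V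
      omega
    have hnebot : (K ⊓ V : Submodule ℂ (Fin n ⊕ Fin n → ℂ)) ≠ ⊥ := by
      intro h
      rw [h] at hint
      simp at hint
    obtain ⟨x, hxKV, hxne⟩ := Submodule.exists_mem_ne_zero_of_ne_bot hnebot
    obtain ⟨g, hg⟩ := hxKV.2
    have hgne : g ≠ 0 := by
      rintro rfl
      exact hxne (by rw [← hg, map_zero])
    have hx0 : WB.mulVec x = 0 := hxKV.1
    have hform := hker (U.mulVec (pp g)) (U.mulVec (np g)) (by
      have : T g = Sum.elim (U.mulVec (pp g)) (U.mulVec (np g)) := rfl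
      rw [← this, hg]
      exact hx0)
    rw [key, key, ← Finset.sum_sub_distrib] at hform
    have hre : (∑ i, ((d i : ℂ) * ((Complex.normSq (pp g i) : ℝ) : ℂ)
          - (d i : ℂ) * ((Complex.normSq (np g i) : ℝ) : ℂ))).re
        = ∑ i, d i * (Complex.normSq (pp g i) - Complex.normSq (np g i)) := by
      rw [Complex.re_sum]
      refine Finset.sum_congr rfl fun i _ => ?_
      simp [mul_sub]
    rw [hre] at hform
    obtain ⟨i0, hi0⟩ : ∃ i, g i ≠ 0 := by
      by_contra h
      push_neg at h
      exact hgne (funext h)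
    have hpos : 0 < ∑ i, d i * (Complex.normSq (pp g i) - Complex.normSq (np g i)) := by
      refine Finset.sum_pos' (fun i _ => ?_) ⟨i0, Finset.mem_univ i0, ?_⟩
      · simp only [hpp, hnp]
        by_cases hdi : 0 < d i
        · simp only [if_pos hdi, Complex.normSq_zero, sub_zero]
          exact mul_nonneg hdi.le (Complex.normSq_nonneg _)
        · simp only [if_neg hdi, Complex.normSq_zero, zero_sub]
          have : d i < 0 := lt_of_le_of_ne (not_lt.mp hdi) (hdne i)
          nlinarith [Complex.normSq_nonneg (g i)]
      · simp only [hpp, hnp]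
        have hnsq : 0 < Complex.normSq (g i0) := Complex.normSq_pos.mpr hi0
        by_cases hdi : 0 < d i0
        · simp only [if_pos hdi, Complex.normSq_zero, sub_zero]
          exact mul_pos hdi hnsq
        · simp only [if_neg hdi, Complex.normSq_zero, zero_sub]
          have : d i0 < 0 := lt_of_le_of_ne (not_lt.mp hdi) (hdne i0)
          nlinarith
    linarith
  have hle : WB.rank ≤ n := by
    simpa using WB.rank_le_card_height
  omega
end

section
/- Let V ∈ C^{n×n} and suppose that ℓ*(V*V - I)ℓ ≤ 0 for all ℓ ∈ C^n. Let W1, W2 ∈ C^{n×n} with W1 + W2 invertible and V = (W1+W2)^{-1}(W1 - W2), and set W_B = [W1 W2] (the n×2n matrix) and Σ = [[0, I],[I, 0]]. Then W_B Σ W_B* ≥ 0 (is positive semidefinite). -/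
open Matrix
open scoped ComplexOrder

private def eE {n : ℕ} (y : Fin n → ℂ) : EuclideanSpace ℂ (Fin n) := WithLp.toLp 2 y

private lemma dot_re_eq_normsq {n : ℕ} (y : Fin n → ℂ) :
    (star y ⬝ᵥ y).re = ‖eE y‖ ^ 2 := by
  rw [norm_sq_eq_re_inner (𝕜 := ℂ)]
  have key : ∀ z w : Fin n → ℂ, star z ⬝ᵥ w = inner ℂ (eE z) (eE w) := by
    intro z w; simp [eE, PiLp.inner_apply, dotProduct, mul_comm]
  exact congrArg Complex.re (key y y)

private lemma dot_im_eq_zero {n : ℕ} (y : Fin n → ℂ) : (star y ⬝ᵥ y).im = 0 :=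
  ((Complex.le_def.mp (dotProduct_star_self_nonneg y)).2).symm

private lemma dot_conjT {n : ℕ} (V : Matrix (Fin n) (Fin n) ℂ) (x y : Fin n → ℂ) :
    star (Vᴴ *ᵥ x) ⬝ᵥ y = star x ⬝ᵥ (V *ᵥ y) := by
  rw [Matrix.star_mulVec, conjTranspose_conjTranspose, Matrix.dotProduct_mulVec]

private lemma psd_one_sub_self_mul_conjTranspose {n : ℕ} (V : Matrix (Fin n) (Fin n) ℂ)
    (h : ∀ ℓ : Fin n → ℂ, (star ℓ ⬝ᵥ (Vᴴ * V - 1).mulVec ℓ).re ≤ 0) :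
    (1 - V * Vᴴ).PosSemidef := by
  set f : (Fin n → ℂ) → EuclideanSpace ℂ (Fin n) := eE with hf
  have hdot : ∀ x : Fin n → ℂ, star x ⬝ᵥ (Vᴴ * V) *ᵥ x = star (V *ᵥ x) ⬝ᵥ (V *ᵥ x) := by
    intro x
    rw [← Matrix.mulVec_mulVec, Matrix.star_mulVec, Matrix.dotProduct_mulVec]
  have hnorm : ∀ x : Fin n → ℂ, ‖f (V *ᵥ x)‖ ≤ ‖f x‖ := by
    intro x
    have h1 := h x
    rw [Matrix.sub_mulVec, dotProduct_sub, Complex.sub_re, Matrix.one_mulVec,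
      hdot x] at h1
    have h2 : ‖f (V *ᵥ x)‖ ^ 2 ≤ ‖f x‖ ^ 2 := by
      rw [← dot_re_eq_normsq, ← dot_re_eq_normsq]; linarith
    nlinarith [norm_nonneg (f (V *ᵥ x)), norm_nonneg (f x)]
  have hnormT : ∀ x : Fin n → ℂ, ‖f (Vᴴ *ᵥ x)‖ ≤ ‖f x‖ := by
    intro x
    have hsq : ‖f (Vᴴ *ᵥ x)‖ ^ 2 ≤ ‖f x‖ * ‖f (Vᴴ *ᵥ x)‖ := by
      have e1 : ‖f (Vᴴ *ᵥ x)‖ ^ 2 = (star x ⬝ᵥ (V *ᵥ (Vᴴ *ᵥ x))).re := by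
        rw [← dot_re_eq_normsq, dot_conjT]
      have e2 : (star x ⬝ᵥ (V *ᵥ (Vᴴ *ᵥ x))).re ≤ ‖f x‖ * ‖f (V *ᵥ (Vᴴ *ᵥ x))‖ := by
        have h5 : star x ⬝ᵥ (V *ᵥ (Vᴴ *ᵥ x)) = inner ℂ (f x) (f (V *ᵥ (Vᴴ *ᵥ x))) := by
          simp [hf, eE, PiLp.inner_apply, dotProduct, mul_comm]
        have h6 := norm_inner_le_norm (𝕜 := ℂ) (f x) (f (V *ᵥ (Vᴴ *ᵥ x)))
        rw [h5]
        refine le_trans (Complex.re_le_norm _) ?_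
        exact h6
      have e3 : ‖f x‖ * ‖f (V *ᵥ (Vᴴ *ᵥ x))‖ ≤ ‖f x‖ * ‖f (Vᴴ *ᵥ x)‖ :=
        mul_le_mul_of_nonneg_left (hnorm _) (norm_nonneg _)
      linarith
    rcases eq_or_lt_of_le (norm_nonneg (f (Vᴴ *ᵥ x))) with h0 | h0
    · rw [← h0]; exact norm_nonneg _
    · nlinarith
  rw [Matrix.posSemidef_iff_dotProduct_mulVec]
  constructor
  · exact Matrix.isHermitian_one.sub (Matrix.isHermitian_mul_conjTranspose_self V)
  · intro x
    have hq : star x ⬝ᵥ (1 - V * Vᴴ) *ᵥ x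
        = star x ⬝ᵥ x - star (Vᴴ *ᵥ x) ⬝ᵥ (Vᴴ *ᵥ x) := by
      rw [Matrix.sub_mulVec, dotProduct_sub, Matrix.one_mulVec,
        ← Matrix.mulVec_mulVec, ← dot_conjT]
    rw [hq, Complex.le_def]
    constructor
    · simp only [Complex.zero_re, Complex.sub_re, dot_re_eq_normsq]
      have := hnormT x
      nlinarith [norm_nonneg (f (Vᴴ *ᵥ x)), norm_nonneg (f x)]
    · simp [Complex.sub_im, dot_im_eq_zero]

theorem stmt4 (n : ℕ) (V W1 W2 : Matrix (Fin n) (Fin n) ℂ)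
    (hQuad : ∀ ℓ : Fin n → ℂ,
      (star ℓ ⬝ᵥ (Vᴴ * V - 1).mulVec ℓ).re ≤ 0)
    (hInv : IsUnit (W1 + W2))
    (hV : V = (W1 + W2)⁻¹ * (W1 - W2)) :
    (Matrix.fromCols W1 W2 *
      (Matrix.fromBlocks (0 : Matrix (Fin n) (Fin n) ℂ) 1 1 0 : Matrix (Fin n ⊕ Fin n) (Fin n ⊕ Fin n) ℂ) *
      (Matrix.fromCols W1 W2)ᴴ).PosSemidef := by
  -- reduce the block product
  have hM : Matrix.fromCols W1 W2 *
      (Matrix.fromBlocks (0 : Matrix (Fin n) (Fin n) ℂ) 1 1 0 : Matrix (Fin n ⊕ Fin n) (Fin n ⊕ Fin n) ℂ) *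
      (Matrix.fromCols W1 W2)ᴴ = W1 * W2ᴴ + W2 * W1ᴴ := by
    rw [Matrix.fromCols_mul_fromBlocks,
      Matrix.conjTranspose_fromCols_eq_fromRows_conjTranspose,
      Matrix.fromCols_mul_fromRows]
    simp [add_comm]
  rw [hM]
  set S := W1 + W2 with hS
  haveI : Invertible S := hInv.invertible
  have hSV : S * V = W1 - W2 := by
    rw [hV, Matrix.mul_inv_cancel_left_of_invertible]
  have hpsd : (1 - V * Vᴴ).PosSemidef := psd_one_sub_self_mul_conjTranspose V hQuad
  have hN : (S * (1 - V * Vᴴ) * Sᴴ).PosSemidef := hpsd.mul_mul_conjTranspose_same S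
  have hEq : S * (1 - V * Vᴴ) * Sᴴ = (W1 * W2ᴴ + W2 * W1ᴴ) + (W1 * W2ᴴ + W2 * W1ᴴ) := by
    have : S * (1 - V * Vᴴ) * Sᴴ = S * Sᴴ - (S * V) * (S * V)ᴴ := by
      simp only [Matrix.conjTranspose_mul]
      noncomm_ring
    rw [this, hSV, hS]
    simp only [Matrix.conjTranspose_add, Matrix.conjTranspose_sub]
    noncomm_ring
  rw [Matrix.posSemidef_iff_dotProduct_mulVec]
  constructor
  · rw [Matrix.IsHermitian]
    simp [Matrix.conjTranspose_add, Matrix.conjTranspose_mul, add_comm]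
  · intro x
    have := hN.dotProduct_mulVec_nonneg x
    rw [hEq] at this
    rw [Matrix.add_mulVec, dotProduct_add] at this
    rw [Complex.le_def] at this ⊢
    constructor
    · have h1 := this.1
      simp only [Complex.add_re, Complex.zero_re] at h1 ⊢
      linarith
    · have h2 := this.2
      simp only [Complex.add_im, Complex.zero_im] at h2 ⊢
      linarith
end

section
/- Let W1, W2 ∈ C^{n×n} with W1 + W2 invertible, and let V = (W1+W2)^{-1}(W1-W2). Then every element (f, e) of the kernel of the n×2n matrix W_B = [W1 W2] is of the form f = (I-V)ℓ, e = (-I-V)ℓ for some ℓ ∈ C^n, and conversely every vector of this form lies in ker W_B. -/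
open Matrix

theorem stmt6 (n : ℕ) (W1 W2 V : Matrix (Fin n) (Fin n) ℂ)
    (hInv : IsUnit (W1 + W2))
    (hV : V = (W1 + W2)⁻¹ * (W1 - W2)) :
    ∀ f e : Fin n → ℂ,
      (Matrix.fromCols W1 W2).mulVec (Sum.elim f e) = 0 ↔
      ∃ ℓ : Fin n → ℂ, f = (1 - V).mulVec ℓ ∧ e = (-1 - V).mulVec ℓ := by
  have hdet : IsUnit (W1 + W2).det := (Matrix.isUnit_iff_isUnit_det _).mp hInv
  have hK : (W1 + W2) * V = W1 - W2 := by
    rw [hV, Matrix.mul_nonsing_inv_cancel_left _ _ hdet]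
  intro f e
  rw [Matrix.fromCols_mulVec_sumElim]
  constructor
  · intro h
    refine ⟨(1/2 : ℂ) • (f - e), ?_, ?_⟩
    · have hSV : (W1 + W2).mulVec (V.mulVec (f - e)) = (W1 - W2).mulVec (f - e) := by
        rw [Matrix.mulVec_mulVec, hK]
      have expand : (W1 + W2).mulVec (f + e + V.mulVec (f - e))
          = (2 : ℂ) • (W1.mulVec f + W2.mulVec e) := by
        rw [Matrix.mulVec_add, hSV]
        simp only [Matrix.add_mulVec, Matrix.sub_mulVec, Matrix.mulVec_add,
          Matrix.mulVec_sub, smul_add, two_smul]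
        abel
      have h2 : (W1 + W2).mulVec (f + e + V.mulVec (f - e)) = 0 := by
        rw [expand, h, smul_zero]
      have h3 := congrArg ((W1 + W2)⁻¹.mulVec ·) h2
      simp only [Matrix.mulVec_mulVec, Matrix.nonsing_inv_mul _ hdet,
        Matrix.one_mulVec, Matrix.mulVec_zero] at h3
      have key : V.mulVec (f - e) = -(f + e) := eq_neg_of_add_eq_zero_left (by rw [add_comm] at h3; exact h3)
      rw [Matrix.sub_mulVec, Matrix.one_mulVec, Matrix.mulVec_smul, key]
      module
    · have hSV : (W1 + W2).mulVec (V.mulVec (f - e)) = (W1 - W2).mulVec (f - e) := by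
        rw [Matrix.mulVec_mulVec, hK]
      have expand : (W1 + W2).mulVec (f + e + V.mulVec (f - e))
          = (2 : ℂ) • (W1.mulVec f + W2.mulVec e) := by
        rw [Matrix.mulVec_add, hSV]
        simp only [Matrix.add_mulVec, Matrix.sub_mulVec, Matrix.mulVec_add,
          Matrix.mulVec_sub, smul_add, two_smul]
        abel
      have h2 : (W1 + W2).mulVec (f + e + V.mulVec (f - e)) = 0 := by
        rw [expand, h, smul_zero]
      have h3 := congrArg ((W1 + W2)⁻¹.mulVec ·) h2
      simp only [Matrix.mulVec_mulVec, Matrix.nonsing_inv_mul _ hdet,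
        Matrix.one_mulVec, Matrix.mulVec_zero] at h3
      have key : V.mulVec (f - e) = -(f + e) := eq_neg_of_add_eq_zero_left (by rw [add_comm] at h3; exact h3)
      rw [Matrix.sub_mulVec, Matrix.neg_mulVec, Matrix.one_mulVec,
        Matrix.mulVec_smul, key]
      module
  · rintro ⟨ℓ, rfl, rfl⟩
    have hzero : W1 * (1 - V) + W2 * (-1 - V) = 0 := by
      have h2 : W1 * (1 - V) + W2 * (-1 - V) = (W1 - W2) - (W1 + W2) * V := by
        noncomm_ring
      rw [h2, hK, sub_self]
    rw [Matrix.mulVec_mulVec, Matrix.mulVec_mulVec, ← Matrix.add_mulVec, hzero,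
      Matrix.zero_mulVec]
end

section
/- Let P1 be an invertible Hermitian n×n matrix and W̃_B an n×2n matrix of rank n. Define W_B = W̃_B [[P1, -P1],[I, I]]^{-1} and Σ = [[0, I],[I, 0]]. Then the following are equivalent: (i) for all (f1, f0) ∈ ker W̃_B, f1* P1 f1 - f0* P1 f0 ≤ 0; (ii) W_B Σ W_B* ≥ 0. -/
open Matrix Module
open scoped ComplexOrder

namespace Stmt18Aux

variable {ι : Type} [Fintype ι] [DecidableEq ι]

lemma star_dot_comm (u v : ι → ℂ) : star u ⬝ᵥ v = star (star v ⬝ᵥ u) := star_dotProduct u v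

lemma herm_dot (H : Matrix ι ι ℂ) (hH : H.IsHermitian) (u v : ι → ℂ) :
    star u ⬝ᵥ H *ᵥ v = star (star v ⬝ᵥ H *ᵥ u) := by
  rw [star_dot_comm, star_mulVec, ← dotProduct_mulVec, hH.eq]

lemma herm_form_im (H : Matrix ι ι ℂ) (hH : H.IsHermitian) (x : ι → ℂ) :
    (star x ⬝ᵥ H *ᵥ x).im = 0 := by
  have h := herm_dot H hH x x
  have := congrArg Complex.im h
  simp only [Complex.star_def, Complex.conj_im] at this
  linarith

lemma key (N : ℕ) (hdim : Fintype.card ι = 2 * N)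
    (S : Matrix ι ι ℂ) (hS : S.IsHermitian) (hS2 : S * S = 1)
    (P K R : Submodule ℂ (ι → ℂ))
    (hPdim : finrank ℂ P = N)
    (hPpos : ∀ w : ι → ℂ, w ∈ P → w ≠ 0 → 0 < (star w ⬝ᵥ S *ᵥ w).re)
    (hKdim : finrank ℂ K = N)
    (horth : ∀ y ∈ K, ∀ u ∈ R, star u ⬝ᵥ y = 0)
    (hKneg : ∀ y ∈ K, (star y ⬝ᵥ S *ᵥ y).re ≤ 0) :
    ∀ x ∈ R, 0 ≤ (star x ⬝ᵥ S *ᵥ x).re := by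
  intro x hx
  set u := S *ᵥ x with hu
  have hux : S *ᵥ u = x := by
    rw [hu, mulVec_mulVec, hS2, one_mulVec]
  have hqq : star u ⬝ᵥ S *ᵥ u = star x ⬝ᵥ S *ᵥ x := by
    conv_rhs => rw [← hux]
    rw [star_mulVec, ← dotProduct_mulVec, hS.eq]
    simp only [mulVec_mulVec, hS2, Matrix.one_mul, Matrix.mul_one]
    rw [hux]
  have horthu : ∀ k ∈ K, star k ⬝ᵥ S *ᵥ u = 0 := by
    intro k hk
    rw [hux, star_dot_comm, horth k hk x hx, star_zero]
  have hmain : 0 ≤ (star u ⬝ᵥ S *ᵥ u).re := by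
    by_contra hneg
    push_neg at hneg
    by_cases huK : u ∈ K
    · rw [horthu u huK] at hneg
      simp at hneg
    · have hune : u ≠ 0 := fun h => huK (h ▸ K.zero_mem)
      set K' : Submodule ℂ (ι → ℂ) := K ⊔ (ℂ ∙ u) with hK'
      have hK'neg : ∀ w ∈ K', (star w ⬝ᵥ S *ᵥ w).re ≤ 0 := by
        intro w hw
        obtain ⟨k, hk, s, hs, rfl⟩ := Submodule.mem_sup.mp hw
        obtain ⟨c, rfl⟩ := Submodule.mem_span_singleton.mp hs
        have e1 : star k ⬝ᵥ S *ᵥ (c • u) = 0 := by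
          rw [mulVec_smul, dotProduct_smul, horthu k hk, smul_zero]
        have e2 : star (c • u) ⬝ᵥ S *ᵥ k = 0 := by
          rw [herm_dot S hS, e1, star_zero]
        have expand : star (k + c • u) ⬝ᵥ S *ᵥ (k + c • u)
            = star k ⬝ᵥ S *ᵥ k + star (c • u) ⬝ᵥ S *ᵥ (c • u) := by
          rw [star_add, mulVec_add, add_dotProduct, dotProduct_add, dotProduct_add, e1, e2]
          ring
        have e3 : star (c • u) ⬝ᵥ S *ᵥ (c • u) = (starRingEnd ℂ c * c) * (star u ⬝ᵥ S *ᵥ u) := by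
          rw [mulVec_smul, dotProduct_smul, star_smul, smul_dotProduct]
          simp only [smul_eq_mul, Complex.star_def]
          ring
        have e4 : ((starRingEnd ℂ c * c) * (star u ⬝ᵥ S *ᵥ u)).re
            = Complex.normSq c * (star u ⬝ᵥ S *ᵥ u).re := by
          rw [mul_comm ((starRingEnd ℂ) c) c, Complex.mul_conj, Complex.re_ofReal_mul]
        rw [expand]
        rw [Complex.add_re, e3, e4]
        have := hKneg k hk
        nlinarith [Complex.normSq_nonneg c]
      have hinf : K ⊓ (ℂ ∙ u) = ⊥ := by
        rw [Submodule.eq_bot_iff]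
        rintro w ⟨hwK, hws⟩
        obtain ⟨c, rfl⟩ := Submodule.mem_span_singleton.mp hws
        rcases eq_or_ne c 0 with rfl | hc
        · simp
        · exact absurd (by simpa [smul_smul, inv_mul_cancel₀ hc] using K.smul_mem c⁻¹ hwK) huK
      have hK'dim : finrank ℂ K' = N + 1 := by
        have := Submodule.finrank_sup_add_finrank_inf_eq K (ℂ ∙ u)
        rw [hinf, hKdim, finrank_span_singleton hune] at this
        simpa using this
      have htot : finrank ℂ (ι → ℂ) = 2 * N := by
        rw [Module.finrank_fintype_fun_eq_card, hdim]
      have hle : finrank ℂ ↥(K' ⊔ P) ≤ 2 * N := htot ▸ Submodule.finrank_le _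
      have hinter : 1 ≤ finrank ℂ ↥(K' ⊓ P) := by
        have := Submodule.finrank_sup_add_finrank_inf_eq K' P
        omega
      have : K' ⊓ P ≠ ⊥ := by
        intro h
        rw [h, finrank_bot] at hinter
        omega
      obtain ⟨w, hw, hwne⟩ := Submodule.exists_mem_ne_zero_of_ne_bot this
      exact absurd (hPpos w hw.2 hwne) (not_lt.mpr (hK'neg w hw.1))
  rw [← hqq]
  exact hmain


lemma star_sum_elim {n : ℕ} (f g : Fin n → ℂ) :
    star (Sum.elim f g) = Sum.elim (star f) (star g) := by
  funext x; cases x <;> rfl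

def diagL (n : ℕ) : (Fin n → ℂ) →ₗ[ℂ] (Fin n ⊕ Fin n → ℂ) where
  toFun v := Sum.elim v v
  map_add' u v := by funext x; cases x <;> rfl
  map_smul' c v := by funext x; cases x <;> rfl

def antidiagL (n : ℕ) : (Fin n → ℂ) →ₗ[ℂ] (Fin n ⊕ Fin n → ℂ) where
  toFun v := Sum.elim v (-v)
  map_add' u v := by funext x; cases x <;> [rfl; skip]; simp; ring
  map_smul' c v := by funext x; cases x <;> [rfl; skip]; simp

lemma diagL_inj (n : ℕ) : Function.Injective (diagL n) := by
  intro u v h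
  funext i
  exact congrFun h (Sum.inl i)

lemma antidiagL_inj (n : ℕ) : Function.Injective (antidiagL n) := by
  intro u v h
  funext i
  exact congrFun h (Sum.inl i)

lemma dot_self_re_pos {m : ℕ} {v : Fin m → ℂ} (hv : v ≠ 0) : 0 < (star v ⬝ᵥ v).re := by
  have h1 : 0 ≤ star v ⬝ᵥ v := dotProduct_star_self_nonneg v
  have h2 : star v ⬝ᵥ v ≠ 0 := fun h => hv (dotProduct_star_self_eq_zero.mp h)
  have := lt_of_le_of_ne h1 (Ne.symm h2)
  exact (Complex.lt_def.mp this).1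

lemma sigma_mulVec {n : ℕ} (f g : Fin n → ℂ) :
    (fromBlocks (0 : Matrix (Fin n) (Fin n) ℂ) 1 1 0) *ᵥ Sum.elim f g = Sum.elim g f := by
  rw [fromBlocks_mulVec]
  simp

lemma diag_pos {n : ℕ} : ∀ w : Fin n ⊕ Fin n → ℂ, w ∈ LinearMap.range (diagL n) → w ≠ 0 →
    0 < (star w ⬝ᵥ (fromBlocks (0 : Matrix (Fin n) (Fin n) ℂ) 1 1 0) *ᵥ w).re := by
  rintro w ⟨v, rfl⟩ hw
  have hv : v ≠ 0 := by
    intro h; apply hw; rw [h]; funext x; cases x <;> rfl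
  show 0 < (star (Sum.elim v v) ⬝ᵥ _ *ᵥ Sum.elim v v).re
  rw [sigma_mulVec, star_sum_elim, sumElim_dotProduct_sumElim]
  have := dot_self_re_pos hv
  rw [Complex.add_re]
  linarith

lemma antidiag_pos {n : ℕ} : ∀ w : Fin n ⊕ Fin n → ℂ, w ∈ LinearMap.range (antidiagL n) → w ≠ 0 →
    0 < (star w ⬝ᵥ (-(fromBlocks (0 : Matrix (Fin n) (Fin n) ℂ) 1 1 0)) *ᵥ w).re := by
  rintro w ⟨v, rfl⟩ hw
  have hv : v ≠ 0 := by
    intro h; apply hw; rw [show (antidiagL n) v = Sum.elim v (-v) from rfl, h]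
    funext x; cases x <;> simp
  show 0 < (star (Sum.elim v (-v)) ⬝ᵥ _ *ᵥ Sum.elim v (-v)).re
  rw [neg_mulVec, sigma_mulVec, dotProduct_neg, star_sum_elim, sumElim_dotProduct_sumElim]
  simp only [dotProduct_neg, star_neg, neg_dotProduct, neg_neg, neg_add_rev, Complex.add_re,
    Complex.neg_re]
  have := dot_self_re_pos hv
  linarith

namespace Blocks

variable {n : ℕ}

lemma hTS (P1 : Matrix (Fin n) (Fin n) ℂ) (hdet : IsUnit P1.det) :
    (fromBlocks P1 (-P1) (1 : Matrix (Fin n) (Fin n) ℂ) 1) *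
      (fromBlocks ((2:ℂ)⁻¹ • P1⁻¹) ((2:ℂ)⁻¹ • (1 : Matrix (Fin n) (Fin n) ℂ))
        (-((2:ℂ)⁻¹ • P1⁻¹)) ((2:ℂ)⁻¹ • 1)) = 1 := by
  have h11 : P1 * ((2:ℂ)⁻¹ • P1⁻¹) + (-P1) * (-((2:ℂ)⁻¹ • P1⁻¹)) = 1 := by
    rw [neg_mul_neg, Matrix.mul_smul, Matrix.mul_nonsing_inv _ hdet, ← add_smul]
    norm_num
  have h12 : P1 * ((2:ℂ)⁻¹ • (1 : Matrix (Fin n) (Fin n) ℂ)) + (-P1) * ((2:ℂ)⁻¹ • 1) = 0 := by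
    simp [Matrix.mul_smul]
  have h21 : (1 : Matrix (Fin n) (Fin n) ℂ) * ((2:ℂ)⁻¹ • P1⁻¹) + 1 * (-((2:ℂ)⁻¹ • P1⁻¹)) = 0 := by
    simp
  have h22 : (1 : Matrix (Fin n) (Fin n) ℂ) * ((2:ℂ)⁻¹ • (1 : Matrix (Fin n) (Fin n) ℂ))
      + 1 * ((2:ℂ)⁻¹ • 1) = 1 := by
    simp only [Matrix.one_mul]
    rw [← add_smul]
    norm_num
  rw [fromBlocks_multiply, h11, h12, h21, h22, fromBlocks_one]

lemma hTST (P1 : Matrix (Fin n) (Fin n) ℂ) (hHerm : P1.IsHermitian) :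
    (fromBlocks P1 (-P1) (1 : Matrix (Fin n) (Fin n) ℂ) 1)ᴴ *
      ((fromBlocks (0 : Matrix (Fin n) (Fin n) ℂ) 1 1 0) * (fromBlocks P1 (-P1) 1 1))
      = fromBlocks (P1 + P1) 0 0 (-(P1 + P1)) := by
  rw [fromBlocks_conjTranspose, fromBlocks_multiply, fromBlocks_multiply]
  simp [hHerm.eq, neg_add]

lemma sigma_herm : (fromBlocks (0 : Matrix (Fin n) (Fin n) ℂ) 1 1 0 :
    Matrix (Fin n ⊕ Fin n) (Fin n ⊕ Fin n) ℂ).IsHermitian := by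
  unfold Matrix.IsHermitian
  rw [fromBlocks_conjTranspose]
  simp

lemma sigma_sq : (fromBlocks (0 : Matrix (Fin n) (Fin n) ℂ) 1 1 0 :
      Matrix (Fin n ⊕ Fin n) (Fin n ⊕ Fin n) ℂ) *
    (fromBlocks (0 : Matrix (Fin n) (Fin n) ℂ) 1 1 0) = 1 := by
  rw [fromBlocks_multiply]
  simp [fromBlocks_one]

end Blocks

end Stmt18Aux

theorem stmt18 (n : ℕ) (P1 : Matrix (Fin n) (Fin n) ℂ)
    (hHerm : P1.IsHermitian) (hInv : IsUnit P1)
    (Wt : Matrix (Fin n) (Fin n ⊕ Fin n) ℂ) (hrank : Wt.rank = n) :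
    (∀ f1 f0 : Fin n → ℂ, Wt.mulVec (Sum.elim f1 f0) = 0 →
        (star f1 ⬝ᵥ P1.mulVec f1 - star f0 ⬝ᵥ P1.mulVec f0).re ≤ 0) ↔
      ((Wt * ((Matrix.fromBlocks P1 (-P1) (1 : Matrix (Fin n) (Fin n) ℂ) 1)⁻¹ : Matrix (Fin n ⊕ Fin n) (Fin n ⊕ Fin n) ℂ)) *
        (Matrix.fromBlocks (0 : Matrix (Fin n) (Fin n) ℂ) 1 1 0 : Matrix (Fin n ⊕ Fin n) (Fin n ⊕ Fin n) ℂ) *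
        (Wt * ((Matrix.fromBlocks P1 (-P1) (1 : Matrix (Fin n) (Fin n) ℂ) 1)⁻¹ : Matrix (Fin n ⊕ Fin n) (Fin n ⊕ Fin n) ℂ))ᴴ).PosSemidef := by
  classical
  have hdet : IsUnit P1.det := (Matrix.isUnit_iff_isUnit_det P1).mp hInv
  set T : Matrix (Fin n ⊕ Fin n) (Fin n ⊕ Fin n) ℂ := fromBlocks P1 (-P1) 1 1 with hTdef
  set Si : Matrix (Fin n ⊕ Fin n) (Fin n ⊕ Fin n) ℂ :=
    fromBlocks ((2:ℂ)⁻¹ • P1⁻¹) ((2:ℂ)⁻¹ • (1 : Matrix (Fin n) (Fin n) ℂ))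
      (-((2:ℂ)⁻¹ • P1⁻¹)) ((2:ℂ)⁻¹ • 1) with hSidef
  have hTS : T * Si = 1 := Stmt18Aux.Blocks.hTS P1 hdet
  have hST : Si * T = 1 := mul_eq_one_comm.mp hTS
  have hTinv : T⁻¹ = Si := inv_eq_right_inv hTS
  set Sg : Matrix (Fin n ⊕ Fin n) (Fin n ⊕ Fin n) ℂ :=
    fromBlocks (0 : Matrix (Fin n) (Fin n) ℂ) 1 1 0 with hSigdef
  set W : Matrix (Fin n) (Fin n ⊕ Fin n) ℂ := Wt * T⁻¹ with hWdef
  have hWT : W * T = Wt := by rw [hWdef, hTinv, Matrix.mul_assoc, hST, Matrix.mul_one]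
  have hTdetU : IsUnit T.det := (Matrix.isUnit_iff_isUnit_det T).mp ⟨⟨T, Si, hTS, hST⟩, rfl⟩
  have hrankW : W.rank = n := by
    rw [hWdef, Matrix.rank_mul_eq_left_of_isUnit_det T⁻¹ Wt (Matrix.isUnit_nonsing_inv_det T hTdetU)]
    exact hrank
  have hermSg : Sg.IsHermitian := Stmt18Aux.Blocks.sigma_herm
  have hSg2 : Sg * Sg = 1 := Stmt18Aux.Blocks.sigma_sq
  have hTST : Tᴴ * (Sg * T) = fromBlocks (P1 + P1) 0 0 (-(P1 + P1)) :=
    Stmt18Aux.Blocks.hTST P1 hHerm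
  have hcard : Fintype.card (Fin n ⊕ Fin n) = 2 * n := by simp [two_mul]
  have hquad : ∀ f1 f0 : Fin n → ℂ,
      star (T *ᵥ Sum.elim f1 f0) ⬝ᵥ Sg *ᵥ (T *ᵥ Sum.elim f1 f0)
        = 2 * (star f1 ⬝ᵥ P1 *ᵥ f1 - star f0 ⬝ᵥ P1 *ᵥ f0) := by
    intro f1 f0
    rw [star_mulVec, mulVec_mulVec, ← dotProduct_mulVec, mulVec_mulVec, hTST,
      fromBlocks_mulVec]
    simp only [zero_mulVec, add_zero, zero_add, Sum.elim_comp_inl, Sum.elim_comp_inr]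
    rw [Stmt18Aux.star_sum_elim, sumElim_dotProduct_sumElim, add_mulVec, neg_mulVec, add_mulVec]
    simp only [dotProduct_add, dotProduct_neg]
    ring
  set Kker : Submodule ℂ (Fin n ⊕ Fin n → ℂ) := LinearMap.ker W.mulVecLin with hKdef
  set Rg : Submodule ℂ (Fin n ⊕ Fin n → ℂ) := LinearMap.range Wᴴ.mulVecLin with hRdef
  have hfinK : Module.finrank ℂ Kker = n := by
    have h1 := LinearMap.finrank_range_add_finrank_ker W.mulVecLin
    have h2 : Module.finrank ℂ (LinearMap.range W.mulVecLin) = n := hrankW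
    rw [h2, Module.finrank_fintype_fun_eq_card, hcard] at h1
    show Module.finrank ℂ (LinearMap.ker W.mulVecLin) = n
    omega
  have hfinR : Module.finrank ℂ Rg = n := by
    have h : Wᴴ.rank = n := by rw [Matrix.rank_conjTranspose, hrankW]
    exact h
  have orth1 : ∀ y ∈ Kker, ∀ u ∈ Rg, star u ⬝ᵥ y = 0 := by
    rintro y hy u ⟨z, rfl⟩
    have hy' : W *ᵥ y = 0 := by rw [← Matrix.mulVecLin_apply]; exact hy
    rw [Matrix.mulVecLin_apply, star_mulVec, conjTranspose_conjTranspose, ← dotProduct_mulVec,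
      hy', dotProduct_zero]
  have orth2 : ∀ y ∈ Rg, ∀ u ∈ Kker, star u ⬝ᵥ y = 0 := by
    intro y hy u hu
    rw [Stmt18Aux.star_dot_comm, orth1 u hu y hy, star_zero]
  have hform : ∀ z, star z ⬝ᵥ (W * Sg * Wᴴ) *ᵥ z = star (Wᴴ *ᵥ z) ⬝ᵥ Sg *ᵥ (Wᴴ *ᵥ z) := by
    intro z
    conv_rhs => rw [star_mulVec, conjTranspose_conjTranspose, mulVec_mulVec,
      ← dotProduct_mulVec, mulVec_mulVec]
    rw [Matrix.mul_assoc]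
  have hermM : (W * Sg * Wᴴ).IsHermitian := Matrix.isHermitian_mul_mul_conjTranspose W hermSg
  have hdiagdim : Module.finrank ℂ (LinearMap.range (Stmt18Aux.diagL n)) = n := by
    rw [LinearMap.finrank_range_of_inj (Stmt18Aux.diagL_inj n),
      Module.finrank_fintype_fun_eq_card, Fintype.card_fin]
  have hantidim : Module.finrank ℂ (LinearMap.range (Stmt18Aux.antidiagL n)) = n := by
    rw [LinearMap.finrank_range_of_inj (Stmt18Aux.antidiagL_inj n),
      Module.finrank_fintype_fun_eq_card, Fintype.card_fin]
  have hmul2re : ∀ d : ℂ, ((2:ℂ) * d).re = 2 * d.re := by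
    intro d; norm_num [Complex.mul_re]
  constructor
  · intro h
    have hKneg : ∀ y ∈ Kker, (star y ⬝ᵥ Sg *ᵥ y).re ≤ 0 := by
      intro y hy
      have hy' : W *ᵥ y = 0 := by rw [← Matrix.mulVecLin_apply]; exact hy
      set v : Fin n ⊕ Fin n → ℂ := Si *ᵥ y with hvdef
      set f1 : Fin n → ℂ := fun i => v (Sum.inl i) with hf1
      set f0 : Fin n → ℂ := fun i => v (Sum.inr i) with hf0
      have hv : Sum.elim f1 f0 = v := by funext x; cases x <;> rfl
      have hTv : T *ᵥ v = y := by rw [hvdef, mulVec_mulVec, hTS, one_mulVec]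
      have hker0 : Wt *ᵥ Sum.elim f1 f0 = 0 := by
        rw [hv, ← hWT, ← mulVec_mulVec, hTv, hy']
      have hle := h f1 f0 hker0
      have hq := hquad f1 f0
      rw [hv, hTv] at hq
      rw [hq, hmul2re]
      linarith
    have hmain := Stmt18Aux.key n hcard Sg hermSg hSg2 (LinearMap.range (Stmt18Aux.diagL n))
      Kker Rg hdiagdim Stmt18Aux.diag_pos hfinK orth1 hKneg
    refine Matrix.PosSemidef.of_dotProduct_mulVec_nonneg hermM fun z => ?_
    rw [Complex.le_def]
    constructor
    · rw [hform z]
      simp only [Complex.zero_re]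
      exact hmain _ ⟨z, by rw [Matrix.mulVecLin_apply]⟩
    · have := Stmt18Aux.herm_form_im _ hermM z
      simp [this]
  · intro hPSD f1 f0 hker0
    have hRneg : ∀ y ∈ Rg, (star y ⬝ᵥ (-Sg) *ᵥ y).re ≤ 0 := by
      rintro y ⟨z, rfl⟩
      rw [Matrix.mulVecLin_apply]
      have h0 := hPSD.dotProduct_mulVec_nonneg z
      rw [hform z] at h0
      have hre := (Complex.le_def.mp h0).1
      simp only [Complex.zero_re] at hre
      rw [neg_mulVec, dotProduct_neg, Complex.neg_re]
      linarith
    have hmain := Stmt18Aux.key n hcard (-Sg) hermSg.neg (by rw [neg_mul_neg]; exact hSg2)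
      (LinearMap.range (Stmt18Aux.antidiagL n)) Rg Kker hantidim Stmt18Aux.antidiag_pos
      hfinR orth2 hRneg
    have hyk : T *ᵥ Sum.elim f1 f0 ∈ Kker := by
      rw [hKdef, LinearMap.mem_ker, Matrix.mulVecLin_apply, mulVec_mulVec, hWT, hker0]
    have hfin := hmain _ hyk
    rw [neg_mulVec, dotProduct_neg, Complex.neg_re, hquad f1 f0, hmul2re] at hfin
    linarith
end
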